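/- Let {b_n}_{n≥1} be a nonnegative real sequence for which there exist a natural number N₀ and a constant M > 0 such that for every m ≥ 1, ∑_{n=m}^{2m} |b_n − b_{n+1}| ≤ M · max_{m ≤ n < m+N₀} b_n. Then the sine series ∑_{n=1}^{∞} b_n sin(nx) converges uniformly on ℝ if and only if lim_{n→∞} n·b_n = 0. -/

import Mathlib

open Filter Finset Real

namespace Thm2Aux

lemma telescope_abs (b : ℕ → ℝ) : ∀ {i j : ℕ}, i ≤ j →
    |b i - b j| ≤ ∑ k ∈ Finset.Ico i j, |b k - b (k+1)| := by
  intro i j h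
  induction j with
  | zero => interval_cases i; simp
  | succ j ih =>
    rcases Nat.lt_or_ge i (j+1) with h' | h'
    · have hij : i ≤ j := by omega
      have : |b i - b (j+1)| ≤ |b i - b j| + |b j - b (j+1)| := by
        have := abs_sub_le (b i) (b j) (b (j+1)); linarith [this]
      rw [Finset.sum_Ico_succ_top hij]
      linarith [ih hij]
    · have : i = j + 1 := by omega
      subst this; simp

noncomputable def Dker (x : ℝ) (n : ℕ) : ℝ := ∑ k ∈ Finset.Ioc 0 n, Real.sin (k * x)

lemma Dker_succ (x : ℝ) (n : ℕ) : Dker x (n+1) = Dker x n + Real.sin ((n+1 : ℕ) * x) := by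
  unfold Dker
  rw [← Finset.sum_Ioc_succ_top (Nat.zero_le n)]

lemma Dker_identity (x : ℝ) (n : ℕ) :
    2 * Real.sin (x/2) * Dker x n = Real.cos (x/2) - Real.cos ((n + 1/2) * x) := by
  induction n with
  | zero =>
    have : ((0:ℕ) + 1/2 : ℝ) * x = x/2 := by push_cast; ring
    simp [Dker]
    norm_num
    rw [show (1/2 : ℝ) * x = x/2 by ring]
    ring
  | succ n ih =>
    rw [Dker_succ, mul_add, ih]
    have e1 : (((n:ℝ) + 1/2) * x + ((n:ℝ) + 1 + 1/2) * x)/2 = ((n:ℕ)+1:ℝ) * x := by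
      push_cast; ring
    have e2 : (((n:ℝ) + 1/2) * x - ((n:ℝ) + 1 + 1/2) * x)/2 = -(x/2) := by ring
    have key : Real.cos (((n:ℝ) + 1/2) * x) - Real.cos (((n:ℝ) + 1 + 1/2) * x)
        = 2 * Real.sin (x/2) * Real.sin (((n:ℕ)+1:ℝ) * x) := by
      rw [Real.cos_sub_cos, e1, e2, Real.sin_neg]; ring
    push_cast at key ⊢
    linarith [key]

lemma sin_half_ge (x : ℝ) (hx : 0 < x) (hxπ : x ≤ π) : x / π ≤ Real.sin (x/2) := by
  have := Real.mul_le_sin (x := x/2) (by positivity) (by linarith)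
  calc x / π = 2/π * (x/2) := by field_simp
  _ ≤ Real.sin (x/2) := this

lemma Dker_bound {x : ℝ} (hx : 0 < x) (hxπ : x ≤ π) (n : ℕ) : |Dker x n| ≤ π / x := by
  have hπ := Real.pi_pos
  have hs : x / π ≤ Real.sin (x/2) := sin_half_ge x hx hxπ
  have hs0 : 0 < Real.sin (x/2) := lt_of_lt_of_le (by positivity) hs
  have hid := Dker_identity x n
  have h2 : |2 * Real.sin (x/2) * Dker x n| ≤ 2 := by
    rw [hid]
    have := Real.abs_cos_le_one (x/2)
    have := Real.abs_cos_le_one ((n + 1/2) * x)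
    rw [abs_sub_le_iff]  -- maybe not; use abs_sub
    constructor <;> [skip; skip] <;> cases' abs_le.1 ‹|Real.cos (x/2)| ≤ 1› with a b <;>
      cases' abs_le.1 ‹|Real.cos ((↑n + 1/2) * x)| ≤ 1› with c d <;> linarith
  have habs : |Dker x n| * (2 * Real.sin (x/2)) ≤ 2 := by
    rw [abs_mul, abs_of_pos (by positivity : (0:ℝ) < 2 * Real.sin (x/2))] at h2
    linarith [h2]
  have hxπle : x / π ≤ Real.sin (x / 2) := hs
  have : |Dker x n| ≤ 1 / Real.sin (x/2) := by
    rw [le_div_iff₀ hs0]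
    nlinarith [habs]
  calc |Dker x n| ≤ 1 / Real.sin (x/2) := this
  _ ≤ 1 / (x/π) := by apply one_div_le_one_div_of_le (by positivity) hs
  _ = π / x := by field_simp

end Thm2Aux

namespace Thm2Aux

lemma abel_id (c D : ℕ → ℝ) : ∀ (q a : ℕ), a ≤ q →
    ∑ k ∈ Finset.Ioc a q, c k * (D k - D (k-1)) =
      ∑ k ∈ Finset.Ioc a q, (c k - c (k+1)) * D k + c (q+1) * D q - c (a+1) * D a := by
  intro q
  induction q with
  | zero => intro a ha; interval_cases a; simp
  | succ q ih =>
    intro a ha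
    rcases Nat.lt_or_ge a (q+1) with h' | h'
    · have haq : a ≤ q := by omega
      rw [Finset.sum_Ioc_succ_top haq, Finset.sum_Ioc_succ_top haq, ih a haq]
      simp only [Nat.add_sub_cancel]
      ring
    · have : a = q + 1 := by omega
      subst this; simp

lemma abel_bound (b : ℕ → ℝ) (hb : ∀ n, 0 ≤ b n) {x : ℝ} (hx : 0 < x) (hxπ : x ≤ π)
    {a q : ℕ} (h : a ≤ q) :
    |∑ k ∈ Finset.Ioc a q, b k * Real.sin (k * x)| ≤
      (π / x) * ((∑ k ∈ Finset.Ioc a q, |b k - b (k+1)|) + b (q+1) + b (a+1)) := by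
  have hrw : ∀ k ∈ Finset.Ioc a q, b k * Real.sin (k * x) = b k * (Dker x k - Dker x (k-1)) := by
    intro k hk
    have hk1 : 1 ≤ k := by have := (Finset.mem_Ioc.1 hk).1; omega
    obtain ⟨m, rfl⟩ : ∃ m, k = m + 1 := ⟨k - 1, by omega⟩
    rw [Dker_succ x m]
    simp only [Nat.add_sub_cancel]
    ring
  rw [Finset.sum_congr rfl hrw, abel_id b (Dker x) q a h]
  have hD : ∀ n, |Dker x n| ≤ π / x := fun n => Dker_bound hx hxπ n
  have hπx : 0 < π / x := by positivity
  have h1 : |∑ k ∈ Finset.Ioc a q, (b k - b (k+1)) * Dker x k| ≤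
      (π / x) * ∑ k ∈ Finset.Ioc a q, |b k - b (k+1)| := by
    calc |∑ k ∈ Finset.Ioc a q, (b k - b (k+1)) * Dker x k|
        ≤ ∑ k ∈ Finset.Ioc a q, |(b k - b (k+1)) * Dker x k| := Finset.abs_sum_le_sum_abs _ _
      _ ≤ ∑ k ∈ Finset.Ioc a q, |b k - b (k+1)| * (π / x) := by
          apply Finset.sum_le_sum
          intro k hk
          rw [abs_mul]
          exact mul_le_mul_of_nonneg_left (hD k) (abs_nonneg _)
      _ = (π / x) * ∑ k ∈ Finset.Ioc a q, |b k - b (k+1)| := by rw [← Finset.sum_mul]; ring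
  have h2 : |b (q+1) * Dker x q| ≤ (π / x) * b (q+1) := by
    rw [abs_mul, abs_of_nonneg (hb _)]
    calc b (q+1) * |Dker x q| ≤ b (q+1) * (π / x) :=
          mul_le_mul_of_nonneg_left (hD q) (hb _)
      _ = (π / x) * b (q+1) := by ring
  have h3 : |b (a+1) * Dker x a| ≤ (π / x) * b (a+1) := by
    rw [abs_mul, abs_of_nonneg (hb _)]
    calc b (a+1) * |Dker x a| ≤ b (a+1) * (π / x) :=
          mul_le_mul_of_nonneg_left (hD a) (hb _)
      _ = (π / x) * b (a+1) := by ring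
  calc |∑ k ∈ Finset.Ioc a q, (b k - b (k+1)) * Dker x k + b (q+1) * Dker x q
        - b (a+1) * Dker x a|
      ≤ |∑ k ∈ Finset.Ioc a q, (b k - b (k+1)) * Dker x k| + |b (q+1) * Dker x q|
        + |b (a+1) * Dker x a| := by
        have ha1 := abs_add_le (∑ k ∈ Finset.Ioc a q, (b k - b (k+1)) * Dker x k + b (q+1) * Dker x q)
          (-(b (a+1) * Dker x a))
        have h4 := abs_add_le (∑ k ∈ Finset.Ioc a q, (b k - b (k+1)) * Dker x k)
          (b (q+1) * Dker x q)
        rw [abs_neg] at ha1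
        rw [sub_eq_add_neg]
        linarith
    _ ≤ (π / x) * ((∑ k ∈ Finset.Ioc a q, |b k - b (k+1)|) + b (q+1) + b (a+1)) := by
        rw [mul_add, mul_add]; linarith

end Thm2Aux


namespace Thm2Aux

lemma var_tail (b : ℕ → ℝ) (M δ : ℝ) (hδ0 : 0 ≤ δ) (hM : 0 < M) (p : ℕ) (hp : 1 ≤ p)
    (hVa : ∀ a : ℕ, p ≤ a → ∑ k ∈ Finset.Icc a (2*a), |b k - b (k+1)| ≤ M * δ / a) :
    ∀ (n a q : ℕ), p ≤ a → q - a ≤ n →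
      ∑ k ∈ Finset.Icc a q, |b k - b (k+1)| ≤ 2 * M * δ / a := by
  have hsub : ∀ a q : ℕ, p ≤ a → q ≤ 2*a →
      ∑ k ∈ Finset.Icc a q, |b k - b (k+1)| ≤ M * δ / a := by
    intro a q hpa hq
    calc ∑ k ∈ Finset.Icc a q, |b k - b (k+1)|
        ≤ ∑ k ∈ Finset.Icc a (2*a), |b k - b (k+1)| := by
          apply Finset.sum_le_sum_of_subset_of_nonneg
          · apply Finset.Icc_subset_Icc_right hq
          · intro i _ _; exact abs_nonneg _
      _ ≤ M * δ / a := hVa a hpa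
  intro n
  induction n using Nat.strong_induction_on with
  | _ n ih =>
    intro a q hpa hqa
    have ha0 : (0:ℝ) < a := by exact_mod_cast lt_of_lt_of_le (by omega : 0 < p) hpa
    have hhalf : M * δ / a ≤ 2 * M * δ / a := by
      rw [div_le_div_iff₀ ha0 ha0]
      nlinarith [mul_nonneg (mul_nonneg hM.le hδ0) ha0.le]
    rcases le_or_gt q (2*a) with hq | hq
    · exact (hsub a q hpa hq).trans hhalf
    · have hrec : ∑ k ∈ Finset.Icc (2*a+1) q, |b k - b (k+1)| ≤ 2 * M * δ / (2*(a:ℝ)+1) := by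
        have hn : q - (2*a+1) < n := by omega
        have := ih _ hn (2*a+1) q (by omega) (by omega)
        push_cast at this
        convert this using 2
      have hsplit : ∑ k ∈ Finset.Icc a q, |b k - b (k+1)| =
          (∑ k ∈ Finset.Icc a (2*a), |b k - b (k+1)|) +
          ∑ k ∈ Finset.Icc (2*a+1) q, |b k - b (k+1)| := by
        have e : Finset.Icc a q = Finset.Icc a (2*a) ∪ Finset.Ioc (2*a) q := by
          rw [← Finset.coe_inj, Finset.coe_union, Finset.coe_Icc, Finset.coe_Icc, Finset.coe_Ioc,
            Set.Icc_union_Ioc_eq_Icc (by omega : a ≤ 2*a) (by omega : 2*a ≤ q)]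
        have hd : Disjoint (Finset.Icc a (2*a)) (Finset.Ioc (2*a) q) := by
          rw [Finset.disjoint_left]
          intro x hx hx'
          have := Finset.mem_Icc.1 hx
          have := Finset.mem_Ioc.1 hx'
          omega
        rw [e, Finset.sum_union hd, Finset.Icc_add_one_left_eq_Ioc]
      have h2a : 2 * M * δ / (2*(a:ℝ)+1) ≤ M * δ / a := by
        rw [div_le_div_iff₀ (by positivity) ha0]
        have : (0:ℝ) ≤ M * δ := by positivity
        nlinarith [this, ha0]
      rw [hsplit]
      have := hsub a (2*a) hpa le_rfl
      calc (∑ k ∈ Finset.Icc a (2*a), |b k - b (k+1)|) +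
            ∑ k ∈ Finset.Icc (2*a+1) q, |b k - b (k+1)|
          ≤ M * δ / a + M * δ / a := by linarith
        _ = 2 * M * δ / a := by ring

end Thm2Aux

namespace Thm2Aux

lemma tail_est (b : ℕ → ℝ) (hb : ∀ n, 0 ≤ b n) (M δ : ℝ) (hδ0 : 0 ≤ δ) (hM : 0 < M)
    (p : ℕ) (hp : 1 ≤ p)
    (htail : ∀ k : ℕ, p ≤ k → (k:ℝ) * b k ≤ δ)
    (hvar : ∀ a q : ℕ, p ≤ a → ∑ k ∈ Finset.Icc a q, |b k - b (k+1)| ≤ 2*M*δ/a)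
    {x : ℝ} (hx : 0 < x) (hxπ : x ≤ π) (q : ℕ) :
    |∑ k ∈ Finset.Ioc p q, b k * Real.sin (k*x)| ≤ (π + 2*M + 2) * δ := by
  have hπ := Real.pi_pos
  have hMδ : (0:ℝ) ≤ (2*M+2)*δ := by positivity
  have hπδ : (0:ℝ) ≤ π * δ := by positivity
  -- Part A : short k's, |sin kx| ≤ kx
  have hA : ∀ a c : ℕ, p ≤ a → (c:ℝ) * x ≤ π →
      |∑ k ∈ Finset.Ioc a c, b k * Real.sin (k*x)| ≤ π * δ := by
    intro a c hpa hcx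
    calc |∑ k ∈ Finset.Ioc a c, b k * Real.sin (k*x)|
        ≤ ∑ k ∈ Finset.Ioc a c, |b k * Real.sin (k*x)| := Finset.abs_sum_le_sum_abs _ _
      _ ≤ ∑ _k ∈ Finset.Ioc a c, δ * x := by
          apply Finset.sum_le_sum
          intro k hk
          have hk' := Finset.mem_Ioc.1 hk
          have hkp : p ≤ k := by omega
          have hkx : (0:ℝ) ≤ (k:ℝ) * x := by positivity
          have hsin : |Real.sin ((k:ℝ)*x)| ≤ (k:ℝ)*x := by
            calc |Real.sin ((k:ℝ)*x)| ≤ |(k:ℝ)*x| := Real.abs_sin_le_abs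
              _ = (k:ℝ)*x := abs_of_nonneg hkx
          calc |b k * Real.sin ((k:ℝ)*x)| = b k * |Real.sin ((k:ℝ)*x)| := by
                rw [abs_mul, abs_of_nonneg (hb k)]
            _ ≤ b k * ((k:ℝ)*x) := mul_le_mul_of_nonneg_left hsin (hb k)
            _ = ((k:ℝ) * b k) * x := by ring
            _ ≤ δ * x := mul_le_mul_of_nonneg_right (htail k hkp) hx.le
      _ = (Finset.Ioc a c).card * (δ * x) := by rw [Finset.sum_const, nsmul_eq_mul]
      _ ≤ (c:ℝ) * (δ * x) := by
          apply mul_le_mul_of_nonneg_right _ (by positivity)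
          rw [Nat.card_Ioc]
          exact_mod_cast Nat.sub_le c a
      _ = ((c:ℝ) * x) * δ := by ring
      _ ≤ π * δ := mul_le_mul_of_nonneg_right hcx hδ0
  -- Part B : long k's, Abel summation
  have hB : ∀ a c : ℕ, p ≤ a → π / x ≤ (a:ℝ) + 1 →
      |∑ k ∈ Finset.Ioc a c, b k * Real.sin (k*x)| ≤ (2*M+2) * δ := by
    intro a c hpa hax
    rcases le_or_gt c a with hca | hac
    · rw [Finset.Ioc_eq_empty (by omega)]
      simpa using hMδ
    · have ha1 : (0:ℝ) < (a:ℝ) + 1 := by positivity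
      have bound := abel_bound b hb hx hxπ (le_of_lt hac)
      have hΔ : ∑ k ∈ Finset.Ioc a c, |b k - b (k+1)| ≤ 2*M*δ/((a:ℝ)+1) := by
        have : Finset.Ioc a c = Finset.Icc (a+1) c := (Finset.Icc_add_one_left_eq_Ioc a c).symm
        rw [this]
        have := hvar (a+1) c (by omega)
        convert this using 3
        push_cast; ring
      have hbc : b (c+1) ≤ δ / ((a:ℝ)+1) := by
        have h1 : ((c:ℝ)+1) * b (c+1) ≤ δ := by
          have := htail (c+1) (by omega); push_cast at this ⊢; linarith
        have hc1 : (0:ℝ) < (c:ℝ)+1 := by positivity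
        rw [le_div_iff₀ ha1]
        calc b (c+1) * ((a:ℝ)+1) ≤ b (c+1) * ((c:ℝ)+1) := by
              apply mul_le_mul_of_nonneg_left _ (hb _)
              have : (a:ℝ) ≤ (c:ℝ) := by exact_mod_cast hac.le
              linarith
          _ ≤ δ := by linarith [h1]
      have hba : b (a+1) ≤ δ / ((a:ℝ)+1) := by
        have h1 : ((a:ℝ)+1) * b (a+1) ≤ δ := by
          have := htail (a+1) (by omega); push_cast at this ⊢; linarith
        rw [le_div_iff₀ ha1]; linarith [h1]
      have hsum : (∑ k ∈ Finset.Ioc a c, |b k - b (k+1)|) + b (c+1) + b (a+1)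
          ≤ (2*M+2) * δ / ((a:ℝ)+1) := by
        have : 2*M*δ/((a:ℝ)+1) + δ/((a:ℝ)+1) + δ/((a:ℝ)+1) = (2*M+2)*δ/((a:ℝ)+1) := by
          field_simp; ring
        linarith [hΔ, hbc, hba]
      have hπxa : 0 < π / x := by positivity
      have hrhs : 0 ≤ (∑ k ∈ Finset.Ioc a c, |b k - b (k+1)|) + b (c+1) + b (a+1) := by
        have : 0 ≤ ∑ k ∈ Finset.Ioc a c, |b k - b (k+1)| :=
          Finset.sum_nonneg fun _ _ => abs_nonneg _
        have := hb (c+1); have := hb (a+1); linarith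
      calc |∑ k ∈ Finset.Ioc a c, b k * Real.sin (k*x)|
          ≤ (π / x) * ((∑ k ∈ Finset.Ioc a c, |b k - b (k+1)|) + b (c+1) + b (a+1)) := bound
        _ ≤ ((a:ℝ)+1) * ((2*M+2) * δ / ((a:ℝ)+1)) := by
            apply mul_le_mul hax hsum hrhs ha1.le
        _ = (2*M+2) * δ := by field_simp
  -- combine
  set N : ℕ := ⌊π / x⌋₊ with hN
  have hπx1 : 1 ≤ π / x := (one_le_div hx).mpr hxπ
  have hNle : (N:ℝ) ≤ π / x := Nat.floor_le (by positivity)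
  have hNx : (N:ℝ) * x ≤ π := by
    rw [← le_div_iff₀ hx] at *; exact hNle
  have hNgt : π / x < (N:ℝ) + 1 := Nat.lt_floor_add_one _
  rcases le_or_gt q N with hqN | hNq
  · have : (q:ℝ) * x ≤ π := by
      have : (q:ℝ) ≤ (N:ℝ) := by exact_mod_cast hqN
      nlinarith [hx]
    have := hA p q le_rfl this
    linarith
  · rcases le_or_gt N p with hNp | hpN
    · have : π / x ≤ (p:ℝ) + 1 := by
        have : (N:ℝ) ≤ (p:ℝ) := by exact_mod_cast hNp
        linarith
      have := hB p q le_rfl this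
      linarith
    · have hsplit := Finset.sum_Ioc_consecutive (fun k : ℕ => b k * Real.sin (k*x))
        (le_of_lt hpN) (le_of_lt hNq)
      have h1 := hA p N le_rfl hNx
      have h2 := hB N q (le_of_lt hpN) (le_of_lt hNgt)
      calc |∑ k ∈ Finset.Ioc p q, b k * Real.sin (k*x)|
          = |(∑ k ∈ Finset.Ioc p N, b k * Real.sin (k*x)) +
              ∑ k ∈ Finset.Ioc N q, b k * Real.sin (k*x)| := by rw [hsplit]
        _ ≤ |∑ k ∈ Finset.Ioc p N, b k * Real.sin (k*x)| +
              |∑ k ∈ Finset.Ioc N q, b k * Real.sin (k*x)| := abs_add_le _ _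
        _ ≤ π * δ + (2*M+2) * δ := by linarith
        _ = (π + 2*M + 2) * δ := by ring

end Thm2Aux

namespace Thm2Aux

lemma sum_sin_neg (b : ℕ → ℝ) (p q : ℕ) (t : ℝ) :
    ∑ k ∈ Finset.Ioc p q, b k * Real.sin (k * (-t)) =
      -∑ k ∈ Finset.Ioc p q, b k * Real.sin (k * t) := by
  rw [← Finset.sum_neg_distrib]
  apply Finset.sum_congr rfl
  intro k _
  rw [mul_neg, Real.sin_neg]
  ring

lemma sum_sin_per (b : ℕ → ℝ) (p q : ℕ) (t : ℝ) (m : ℤ) :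
    ∑ k ∈ Finset.Ioc p q, b k * Real.sin (k * (t + m * (2 * π))) =
      ∑ k ∈ Finset.Ioc p q, b k * Real.sin (k * t) := by
  apply Finset.sum_congr rfl
  intro k _
  have harg : (k:ℝ) * (t + m * (2 * π)) = (k:ℝ) * t + ((k * m : ℤ) : ℝ) * (2 * π) := by
    push_cast; ring
  rw [harg, Real.sin_add_int_mul_two_pi]

lemma bound_all_x (b : ℕ → ℝ) (p q : ℕ) (C : ℝ) (hC : 0 ≤ C)
    (h : ∀ x : ℝ, 0 < x → x ≤ π → |∑ k ∈ Finset.Ioc p q, b k * Real.sin (k * x)| ≤ C) :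
    ∀ x : ℝ, |∑ k ∈ Finset.Ioc p q, b k * Real.sin (k * x)| ≤ C := by
  have hπ := Real.pi_pos
  have h2π : (0:ℝ) < 2 * π := by positivity
  intro x
  set m : ℤ := ⌊x / (2 * π)⌋ with hm
  set t : ℝ := x - m * (2 * π) with htdef
  have ht0 : 0 ≤ t := by
    have h1 : (m:ℝ) ≤ x / (2 * π) := Int.floor_le _
    have h2 : (m:ℝ) * (2 * π) ≤ x := by
      rw [← le_div_iff₀ h2π]; exact h1
    simp only [htdef]; linarith
  have ht2 : t < 2 * π := by
    have h1 : x / (2 * π) < (m:ℝ) + 1 := Int.lt_floor_add_one _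
    have h2 : x < ((m:ℝ) + 1) * (2 * π) := by
      rw [div_lt_iff₀ h2π] at h1; linarith [h1]
    simp only [htdef]; nlinarith [h2]
  have hxt : ∑ k ∈ Finset.Ioc p q, b k * Real.sin (k * x) =
      ∑ k ∈ Finset.Ioc p q, b k * Real.sin (k * t) := by
    have : x = t + m * (2 * π) := by rw [htdef]; ring
    rw [this, sum_sin_per]
  rw [hxt]
  rcases eq_or_lt_of_le ht0 with ht0' | ht0'
  · rw [← ht0']
    have : ∑ k ∈ Finset.Ioc p q, b k * Real.sin ((k:ℝ) * 0) = 0 := by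
      apply Finset.sum_eq_zero; intro k _; rw [mul_zero, Real.sin_zero, mul_zero]
    rw [this]; simpa using hC
  · rcases le_or_gt t π with htπ | htπ
    · exact h t ht0' htπ
    · set y : ℝ := 2 * π - t with hy
      have hy0 : 0 < y := by simp only [hy]; linarith
      have hyπ : y ≤ π := by simp only [hy]; linarith
      have hty : ∑ k ∈ Finset.Ioc p q, b k * Real.sin (k * t) =
          -∑ k ∈ Finset.Ioc p q, b k * Real.sin (k * y) := by
        have : t = -y + (1:ℤ) * (2 * π) := by rw [hy]; push_cast; ring
        rw [this, sum_sin_per, sum_sin_neg]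
      rw [hty, abs_neg]
      exact h y hy0 hyπ

end Thm2Aux

open Thm2Aux in
/-- Theorem 2 of the paper (uniform convergence part): for a nonnegative
sequence `b` satisfying condition (2*), the sine series `∑ bₙ sin(nx)`
converges uniformly on ℝ if and only if `n·bₙ → 0`. -/
theorem theorem2_uniform (b : ℕ → ℝ) (hb : ∀ n : ℕ, 0 ≤ b n)
    (h2star : ∃ N₀ : ℕ, ∃ hN₀ : 0 < N₀, ∃ M : ℝ, 0 < M ∧ ∀ m : ℕ, 1 ≤ m →
      ∑ n ∈ Finset.Icc m (2 * m), |b n - b (n + 1)| ≤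
        M * (Finset.Ico m (m + N₀)).sup' (Finset.nonempty_Ico.mpr (by omega)) b) :
    (∃ f : ℝ → ℝ, TendstoUniformly
        (fun (n : ℕ) (x : ℝ) => ∑ k ∈ Finset.Icc 1 n, b k * Real.sin (k * x)) f atTop)
      ↔ Tendsto (fun n : ℕ => (n : ℝ) * b n) atTop (nhds 0) := by
  obtain ⟨N₀, hN₀, M, hM, hcond⟩ := h2star
  have hπ := Real.pi_pos
  set S : ℕ → ℝ → ℝ := fun n x => ∑ k ∈ Finset.Icc 1 n, b k * Real.sin (k * x) with hS
  have hdiff : ∀ (m n : ℕ), n ≤ m → ∀ x : ℝ,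
      S m x - S n x = ∑ k ∈ Finset.Ioc n m, b k * Real.sin (k * x) := by
    intro m n hnm x
    simp only [hS]
    rw [show Finset.Icc 1 m = Finset.Ioc 0 m from (Finset.Icc_add_one_left_eq_Ioc 0 m),
        show Finset.Icc 1 n = Finset.Ioc 0 n from (Finset.Icc_add_one_left_eq_Ioc 0 n),
        ← Finset.sum_Ioc_consecutive (fun k : ℕ => b k * Real.sin (k * x)) (Nat.zero_le n) hnm]
    ring
  constructor
  · -- FORWARD: uniform convergence ⟹ n bₙ → 0
    rintro ⟨f, hf⟩
    have hUC : UniformCauchySeqOn S atTop Set.univ :=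
      (tendstoUniformlyOn_univ.mpr hf).uniformCauchySeqOn
    rw [Metric.uniformCauchySeqOn_iff] at hUC
    rw [Metric.tendsto_atTop]
    intro ε hε
    set ε₁ : ℝ := ε / (8 * ((N₀:ℝ) + 1) * (M + 1) + 1) with hε₁def
    have hden : (0:ℝ) < 8 * ((N₀:ℝ) + 1) * (M + 1) + 1 := by positivity
    have hε₁ : 0 < ε₁ := by positivity
    obtain ⟨N₁, hN₁⟩ := hUC ε₁ hε₁
    -- block sums are small
    have hblock : ∀ h : ℕ, N₁ + 1 ≤ h →
        ∑ k ∈ Finset.Ioc (h-1) (2*h), b k ≤ 2 * ε₁ := by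
      intro h hh
      have hh0 : 0 < h := by omega
      have hh0' : (0:ℝ) < (h:ℝ) := by exact_mod_cast hh0
      set x : ℝ := π / (4*h) with hxdef
      have hx0 : 0 < x := by positivity
      have hsin : ∀ k ∈ Finset.Ioc (h-1) (2*h), (1/2 : ℝ) * b k ≤ b k * Real.sin (k*x) := by
        intro k hk
        obtain ⟨hk1, hk2⟩ := Finset.mem_Ioc.1 hk
        have hkh : h ≤ k := by omega
        have hkr : (h:ℝ) ≤ (k:ℝ) := by exact_mod_cast hkh
        have hkr2 : (k:ℝ) ≤ 2*(h:ℝ) := by exact_mod_cast hk2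
        have hkx_le : (k:ℝ) * x ≤ π/2 := by
          have h1 : (k:ℝ) * x ≤ (2*(h:ℝ)) * x := mul_le_mul_of_nonneg_right hkr2 hx0.le
          have h2 : (2*(h:ℝ)) * x = π/2 := by
            rw [hxdef]; field_simp; ring
          linarith
        have hkx_ge : π/4 ≤ (k:ℝ) * x := by
          have h1 : (h:ℝ) * x ≤ (k:ℝ) * x := mul_le_mul_of_nonneg_right hkr hx0.le
          have h2 : (h:ℝ) * x = π/4 := by
            rw [hxdef]; field_simp
          linarith
        have hkx0 : (0:ℝ) ≤ (k:ℝ) * x := by positivity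
        have hs2 : (1/2 : ℝ) ≤ Real.sin ((k:ℝ)*x) := by
          have hms := Real.mul_le_sin (x := (k:ℝ)*x) hkx0 hkx_le
          have h3 : 2/π * (π/4) ≤ 2/π * ((k:ℝ)*x) :=
            mul_le_mul_of_nonneg_left hkx_ge (by positivity)
          have h4 : 2/π * (π/4) = 1/2 := by
            field_simp
            norm_num
          linarith
        calc (1/2 : ℝ) * b k ≤ Real.sin ((k:ℝ)*x) * b k :=
              mul_le_mul_of_nonneg_right hs2 (hb k)
          _ = b k * Real.sin ((k:ℝ)*x) := by ring
      have hCauchy : |S (2*h) x - S (h-1) x| < ε₁ := by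
        have := hN₁ (2*h) (by omega) (h-1) (by omega) x (Set.mem_univ x)
        rwa [Real.dist_eq] at this
      have heq : S (2*h) x - S (h-1) x =
          ∑ k ∈ Finset.Ioc (h-1) (2*h), b k * Real.sin (k*x) := hdiff (2*h) (h-1) (by omega) x
      have hsum : (1/2 : ℝ) * ∑ k ∈ Finset.Ioc (h-1) (2*h), b k ≤
          ∑ k ∈ Finset.Ioc (h-1) (2*h), b k * Real.sin (k*x) := by
        rw [Finset.mul_sum]
        exact Finset.sum_le_sum hsin
      have hle : ∑ k ∈ Finset.Ioc (h-1) (2*h), b k * Real.sin (k*x) ≤ ε₁ := by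
        rw [← heq]
        calc S (2*h) x - S (h-1) x ≤ |S (2*h) x - S (h-1) x| := le_abs_self _
          _ ≤ ε₁ := hCauchy.le
      linarith
    -- claim: b n controlled by window sums
    have hclaim : ∀ n a : ℕ, N₀ ≤ a → 1 ≤ a → a ≤ n → n ≤ 2*a →
        b n ≤ (1+M) * ∑ k ∈ Finset.Ico a (a+N₀), b k := by
      intro n a hN₀a h1a han hn2a
      have hne : (Finset.Ico a (a+N₀)).Nonempty := Finset.nonempty_Ico.mpr (by omega)
      obtain ⟨j, hj, hjs⟩ := Finset.exists_mem_eq_sup' hne b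
      obtain ⟨hja, hjN⟩ := Finset.mem_Ico.1 hj
      have hj2a : j ≤ 2*a := by omega
      have htel : |b n - b j| ≤ ∑ k ∈ Finset.Icc a (2*a), |b k - b (k+1)| := by
        have hsubs : ∀ u v : ℕ, a ≤ u → v ≤ 2*a →
            ∑ k ∈ Finset.Ico u v, |b k - b (k+1)| ≤
              ∑ k ∈ Finset.Icc a (2*a), |b k - b (k+1)| := by
          intro u v hu hv
          apply Finset.sum_le_sum_of_subset_of_nonneg
          · intro k hk
            have := Finset.mem_Ico.1 hk
            rw [Finset.mem_Icc]
            omega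
          · intro i _ _; exact abs_nonneg _
        rcases le_total n j with hnj | hjn
        · exact (telescope_abs b hnj).trans (hsubs n j han hj2a)
        · rw [abs_sub_comm]
          exact (telescope_abs b hjn).trans (hsubs j n hja hn2a)
      have hVle : ∑ k ∈ Finset.Icc a (2*a), |b k - b (k+1)| ≤ M * b j := by
        have := hcond a h1a
        rwa [hjs] at this
      have hjsum : b j ≤ ∑ k ∈ Finset.Ico a (a+N₀), b k :=
        Finset.single_le_sum (fun i _ => hb i) hj
      have hbn : b n ≤ b j + M * b j := by
        have h1 : b n - b j ≤ |b n - b j| := le_abs_self _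
        linarith [htel, hVle]
      have hbj0 : 0 ≤ b j := hb j
      calc b n ≤ b j + M * b j := hbn
        _ = (1+M) * b j := by ring
        _ ≤ (1+M) * ∑ k ∈ Finset.Ico a (a+N₀), b k := by
            apply mul_le_mul_of_nonneg_left hjsum (by linarith)
    -- disjoint windows sum
    have hwin : ∀ (h q : ℕ),
        ∑ i ∈ Finset.range q, ∑ k ∈ Finset.Ico (h + i*N₀) (h + i*N₀ + N₀), b k =
          ∑ k ∈ Finset.Ico h (h + q*N₀), b k := by
      intro h q
      induction q with
      | zero => simp
      | succ q ih =>
        rw [Finset.sum_range_succ, ih,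
          Finset.sum_Ico_consecutive (fun k : ℕ => b k) (Nat.le_add_right h (q*N₀))
            (Nat.le_add_right _ N₀)]
        congr 1
        ring
    -- main estimate
    refine ⟨max (8*(N₀+1)) (2*N₁+4), ?_⟩
    intro n hn
    have hn1 : 8*(N₀+1) ≤ n := le_trans (le_max_left _ _) hn
    have hn2 : 2*N₁+4 ≤ n := le_trans (le_max_right _ _) hn
    set h : ℕ := n/2 + 1 with hhdef
    have hhN₁ : N₁ + 1 ≤ h := by omega
    have hhN₀ : N₀ ≤ h := by omega
    have hh1 : 1 ≤ h := by omega
    have hn2h : n ≤ 2*h := by omega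
    obtain ⟨q, P, r, hq1, hP, hr1, hr2⟩ :
        ∃ q P r, 1 ≤ q ∧ P = N₀ * q ∧ n - h = P + r ∧ r < N₀ := by
      refine ⟨(n - h)/N₀, N₀ * ((n - h)/N₀), (n - h) % N₀, ?_, rfl, ?_, Nat.mod_lt _ hN₀⟩
      · rw [Nat.one_le_div_iff hN₀]; omega
      · rw [Nat.div_add_mod]
    -- per-window bounds
    have hperwin : ∀ i, i < q → b n ≤ (1+M) * ∑ k ∈ Finset.Ico (h + i*N₀) (h + i*N₀ + N₀), b k := by
      intro i hi
      obtain ⟨w, hw, hwP⟩ : ∃ w, w = i*N₀ ∧ w + N₀ ≤ P := by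
        refine ⟨i*N₀, rfl, ?_⟩
        calc i*N₀ + N₀ = (i+1) * N₀ := by ring
          _ ≤ q * N₀ := Nat.mul_le_mul_right N₀ (by omega)
          _ = N₀ * q := Nat.mul_comm q N₀
          _ = P := hP.symm
      rw [← hw]
      apply hclaim n (h + w) (by omega) (by omega) (by omega) (by omega)
    -- sum the per-window bounds
    have hsumwin : (q:ℝ) * b n ≤ (1+M) * ∑ k ∈ Finset.Ico h (h + q*N₀), b k := by
      rw [← hwin h q, Finset.mul_sum]
      calc (q:ℝ) * b n = ∑ _i ∈ Finset.range q, b n := by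
            rw [Finset.sum_const, Finset.card_range, nsmul_eq_mul]
        _ ≤ ∑ i ∈ Finset.range q, (1+M) * ∑ k ∈ Finset.Ico (h + i*N₀) (h + i*N₀ + N₀), b k := by
            apply Finset.sum_le_sum
            intro i hi
            exact hperwin i (Finset.mem_range.1 hi)
    have hrange : ∑ k ∈ Finset.Ico h (h + q*N₀), b k ≤ ∑ k ∈ Finset.Ioc (h-1) (2*h), b k := by
      apply Finset.sum_le_sum_of_subset_of_nonneg
      · intro k hk
        have hk' := Finset.mem_Ico.1 hk
        rw [Finset.mem_Ioc]
        have : h + q * N₀ = h + P := by rw [hP, Nat.mul_comm]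
        rw [this] at hk'
        omega
      · intro i _ _; exact hb i
    have hqb : (q:ℝ) * b n ≤ (1+M) * (2*ε₁) := by
      have hbl := hblock h hhN₁
      calc (q:ℝ) * b n ≤ (1+M) * ∑ k ∈ Finset.Ico h (h + q*N₀), b k := hsumwin
        _ ≤ (1+M) * (2*ε₁) := by
            apply mul_le_mul_of_nonneg_left _ (by linarith)
            linarith [hrange, hbl]
    -- relate n and q
    have hn4q : (n:ℝ) ≤ 4 * (N₀:ℝ) * (q:ℝ) := by
      have hnat : n ≤ 4 * P := by omega
      calc (n:ℝ) ≤ ((4 * P : ℕ) : ℝ) := by exact_mod_cast hnat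
        _ = 4 * (N₀:ℝ) * (q:ℝ) := by rw [hP]; push_cast; ring
    have hq0 : (0:ℝ) < (q:ℝ) := by exact_mod_cast hq1
    have hnb : (n:ℝ) * b n ≤ 8 * (N₀:ℝ) * (1+M) * ε₁ := by
      calc (n:ℝ) * b n ≤ (4 * (N₀:ℝ) * (q:ℝ)) * b n :=
            mul_le_mul_of_nonneg_right hn4q (hb n)
        _ = 4 * (N₀:ℝ) * ((q:ℝ) * b n) := by ring
        _ ≤ 4 * (N₀:ℝ) * ((1+M) * (2*ε₁)) := by
            apply mul_le_mul_of_nonneg_left hqb (by positivity)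
        _ = 8 * (N₀:ℝ) * (1+M) * ε₁ := by ring
    have hfin : 8 * (N₀:ℝ) * (1+M) * ε₁ < ε := by
      have hlt : 8 * (N₀:ℝ) * (1+M) < 8 * ((N₀:ℝ)+1) * (M+1) + 1 := by
        nlinarith [hM, (by positivity : (0:ℝ) ≤ (N₀:ℝ))]
      calc 8 * (N₀:ℝ) * (1+M) * ε₁ < (8 * ((N₀:ℝ)+1) * (M+1) + 1) * ε₁ :=
            mul_lt_mul_of_pos_right hlt hε₁
        _ = ε := by rw [hε₁def]; field_simp
    rw [Real.dist_eq, sub_zero, abs_of_nonneg (mul_nonneg (by positivity) (hb n))]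
    linarith
  · -- BACKWARD: n bₙ → 0 ⟹ uniform convergence
    intro ht
    have hUC : UniformCauchySeqOn S atTop Set.univ := by
      rw [Metric.uniformCauchySeqOn_iff]
      intro ε hε
      set δ : ℝ := ε / (2*(π + 2*M + 2)) with hδdef
      have hden : (0:ℝ) < 2*(π + 2*M + 2) := by positivity
      have hδ : 0 < δ := by positivity
      obtain ⟨p₀, hp₀⟩ := (Metric.tendsto_atTop.mp ht) δ hδ
      set p : ℕ := max p₀ 1 with hpdef
      have hp1 : 1 ≤ p := le_max_right _ _
      have htail : ∀ k : ℕ, p ≤ k → (k:ℝ) * b k ≤ δ := by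
        intro k hk
        have := hp₀ k (le_trans (le_max_left _ _) hk)
        rw [Real.dist_eq, sub_zero] at this
        calc (k:ℝ) * b k ≤ |(k:ℝ) * b k| := le_abs_self _
          _ ≤ δ := this.le
      have hVa : ∀ a : ℕ, p ≤ a → ∑ k ∈ Finset.Icc a (2*a), |b k - b (k+1)| ≤ M * δ / a := by
        intro a ha
        have h1a : 1 ≤ a := le_trans hp1 ha
        have ha0 : (0:ℝ) < (a:ℝ) := by exact_mod_cast h1a
        refine (hcond a h1a).trans ?_
        rw [show M * δ / (a:ℝ) = M * (δ / a) from by ring]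
        apply mul_le_mul_of_nonneg_left _ hM.le
        apply Finset.sup'_le
        intro k hk
        obtain ⟨hak, _⟩ := Finset.mem_Ico.1 hk
        have hka : (a:ℝ) ≤ (k:ℝ) := by exact_mod_cast hak
        have hk0 : (0:ℝ) < (k:ℝ) := by linarith
        have h1 : (k:ℝ) * b k ≤ δ := htail k (le_trans ha hak)
        rw [le_div_iff₀ ha0]
        calc b k * (a:ℝ) ≤ b k * (k:ℝ) := mul_le_mul_of_nonneg_left hka (hb k)
          _ = (k:ℝ) * b k := by ring
          _ ≤ δ := h1
      have hvar : ∀ a c : ℕ, p ≤ a →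
          ∑ k ∈ Finset.Icc a c, |b k - b (k+1)| ≤ 2*M*δ/(a:ℝ) :=
        fun a c ha => var_tail b M δ hδ.le hM p hp1 hVa (c - a) a c ha le_rfl
      refine ⟨p, ?_⟩
      have key : ∀ m n : ℕ, p ≤ n → n ≤ m → ∀ x : ℝ,
          |S m x - S n x| ≤ (π + 2*M + 2) * δ := by
        intro m n hpn hnm x
        rw [hdiff m n hnm x]
        refine bound_all_x b n m _ (by positivity) ?_ x
        intro y hy0 hyπ
        exact tail_est b hb M δ hδ.le hM n (le_trans hp1 hpn)
          (fun k hk => htail k (le_trans hpn hk))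
          (fun a c ha => hvar a c (le_trans hpn ha)) hy0 hyπ m
      have hhalf : (π + 2*M + 2) * δ < ε := by
        have heq2 : (π + 2*M + 2) * δ = ε / 2 := by
          rw [hδdef]
          field_simp
        rw [heq2]
        linarith
      intro m hm n hn x _
      rw [Real.dist_eq]
      rcases le_total n m with hnm | hmn
      · calc |S m x - S n x| ≤ (π + 2*M + 2) * δ := key m n hn hnm x
          _ < ε := hhalf
      · rw [abs_sub_comm]
        calc |S n x - S m x| ≤ (π + 2*M + 2) * δ := key n m hm hmn x
          _ < ε := hhalf
    have hcau : ∀ x : ℝ, ∃ l : ℝ, Tendsto (fun n => S n x) atTop (nhds l) := by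
      intro x
      have hcs : CauchySeq (fun n => S n x) := by
        rw [Metric.cauchySeq_iff]
        intro ε hε
        obtain ⟨N, hN⟩ := Metric.uniformCauchySeqOn_iff.mp hUC ε hε
        exact ⟨N, fun m hm n hn => hN m hm n hn x (Set.mem_univ x)⟩
      exact cauchySeq_tendsto_of_complete hcs
    choose f hf using hcau
    refine ⟨f, ?_⟩
    rw [← tendstoUniformlyOn_univ]
    exact hUC.tendstoUniformlyOn_of_tendsto (fun x _ => hf x)
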